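/- Let a, b > 0, s > 0, and δ, γ ∈ ℝ. With the bandwidth h_n = (2a+2b)^{1/s}·(ln n + (α/s)·ln ln n)^{-1/s} where α = s - 2δ - 2γ - 1, the quantity h_n^{2δ}·exp(-2a/h_n^s) + h_n^{s-1-2γ}·exp(2b/h_n^s)/n is O(n^{-a/(a+b)}·(ln n)^{-ξ}) as n → ∞, where ξ = (2δb + (s-2γ-1)a)/((a+b)s). -/

import Mathlib

open Real Filter Asymptotics

/-- MISE bound in the case r = s: bias² + variance at the optimal bandwidth is
`O(n^{-a/(a+b)} (log n)^{-ξ})` with `ξ = (2δb + (s-2γ-1)a)/((a+b)s)`. -/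
theorem stmt1 (s a b δ γ : ℝ) (hs : 0 < s) (ha : 0 < a) (hb : 0 < b)
    (α ξ : ℝ) (hα : α = s - 2*δ - 2*γ - 1)
    (hξ : ξ = (2*δ*b + (s - 2*γ - 1)*a) / ((a+b)*s))
    (h : ℕ → ℝ)
    (hh : ∀ n : ℕ, h n = (2*a+2*b) ^ (1/s) *
      (Real.log n + (α/s) * Real.log (Real.log n)) ^ (-(1/s))) :
    (fun n : ℕ => (h n) ^ (2*δ) * Real.exp (-(2*a) / (h n) ^ s)
        + (h n) ^ (s - 1 - 2*γ) * Real.exp (2*b / (h n) ^ s) / n)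
      =O[atTop]
    (fun n : ℕ => (n : ℝ) ^ (-(a/(a+b))) * (Real.log n) ^ (-ξ)) := by
  have hab : (0:ℝ) < a + b := by linarith
  set c : ℝ := α / s with hcdef
  set C : ℝ := 2*a + 2*b with hCdef
  have hC : 0 < C := by rw [hCdef]; linarith
  set L : ℕ → ℝ := fun n => Real.log n + c * Real.log (Real.log n) with hLdef
  set w : ℕ → ℝ := fun n => L n / Real.log n with hwdef
  set g : ℕ → ℝ := fun n => (n : ℝ) ^ (-(a/(a+b))) * (Real.log n) ^ (-ξ) with hgdef
  have hh' : ∀ n : ℕ, h n = C ^ (1/s) * (L n) ^ (-(1/s)) := fun n => by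
    rw [hh n]
  have tlog : Tendsto (fun n : ℕ => Real.log n) atTop atTop :=
    Real.tendsto_log_atTop.comp tendsto_natCast_atTop_atTop
  have tll : Tendsto (fun n : ℕ => Real.log (Real.log n) / Real.log n) atTop (nhds 0) := by
    have h1 : Tendsto (fun x : ℝ => Real.log x / x) atTop (nhds 0) := by
      simpa using Real.isLittleO_log_id_atTop.tendsto_div_nhds_zero
    exact h1.comp tlog
  have hw1 : Tendsto w atTop (nhds 1) := by
    have hev : ∀ᶠ n : ℕ in atTop, 1 + c * (Real.log (Real.log n) / Real.log n) = w n := by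
      filter_upwards [tlog.eventually_gt_atTop 0] with n hn
      rw [hwdef, hLdef]
      field_simp
    have h2 : Tendsto (fun n : ℕ => 1 + c * (Real.log (Real.log n) / Real.log n))
        atTop (nhds (1 + c * 0)) := tendsto_const_nhds.add (tll.const_mul c)
    rw [mul_zero, add_zero] at h2
    exact h2.congr' hev
  have hLtop : Tendsto L atTop atTop := by
    have hev : ∀ᶠ n : ℕ in atTop, w n * Real.log n = L n := by
      filter_upwards [tlog.eventually_gt_atTop 0] with n hn
      rw [hwdef]
      exact div_mul_cancel₀ _ hn.ne'
    exact (hw1.pos_mul_atTop one_pos tlog).congr' hev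
  -- master pointwise computation
  have master : ∀ (p t : ℝ) (n : ℕ), (0:ℝ) < n → 1 ≤ Real.log n → 1 ≤ L n →
      (h n) ^ p * Real.exp (t / (h n) ^ s) =
        C ^ ((1/s)*p) * (w n) ^ (-((1/s)*p)) *
          ((n:ℝ) ^ (t/C) * (Real.log n) ^ (t/C*c + -((1/s)*p))) := by
    intro p t n hn0 hlog1 hL1
    have hlog0 : 0 < Real.log n := by linarith
    have hL0 : 0 < L n := by linarith
    have hw0 : 0 ≤ w n := by rw [hwdef]; exact div_nonneg hL0.le hlog0.le
    have hpow : (h n) ^ s = C * (L n)⁻¹ := by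
      rw [hh' n, Real.mul_rpow (Real.rpow_nonneg hC.le _) (Real.rpow_nonneg hL0.le _),
        ← Real.rpow_mul hC.le, ← Real.rpow_mul hL0.le, one_div_mul_cancel hs.ne',
        Real.rpow_one, neg_mul, one_div_mul_cancel hs.ne', Real.rpow_neg_one]
    have hexp : t / (h n) ^ s = t/C * L n := by
      rw [hpow]
      field_simp
    have hhp : (h n) ^ p = C ^ ((1/s)*p) * (L n) ^ (-((1/s)*p)) := by
      rw [hh' n, Real.mul_rpow (Real.rpow_nonneg hC.le _) (Real.rpow_nonneg hL0.le _),
        ← Real.rpow_mul hC.le, ← Real.rpow_mul hL0.le, neg_mul]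
    have hLw : L n = w n * Real.log n := by
      rw [hwdef]
      exact (div_mul_cancel₀ _ hlog0.ne').symm
    have hwL : (L n) ^ (-((1/s)*p)) = (w n) ^ (-((1/s)*p)) * (Real.log n) ^ (-((1/s)*p)) := by
      rw [hLw, Real.mul_rpow hw0 hlog0.le]
    have hexp2 : Real.exp (t/C * L n) = (n:ℝ) ^ (t/C) * (Real.log n) ^ (t/C*c) := by
      have harg : t/C * L n = Real.log n * (t/C) + Real.log (Real.log n) * (t/C*c) := by
        rw [hLdef]; ring
      rw [harg, Real.exp_add, ← Real.rpow_def_of_pos hn0, ← Real.rpow_def_of_pos hlog0]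
    rw [hexp, hexp2, hhp, hwL, Real.rpow_add hlog0]
    ring
  -- exponent algebra
  have hC0 : (2*a + 2*b : ℝ) ≠ 0 := by positivity
  have u1eq : -(2*a)/C = -(a/(a+b)) := by
    rw [hCdef]; field_simp
  have v1eq : -(2*a)/C*c + -((1/s)*(2*δ)) = -ξ := by
    rw [hCdef, hcdef, hα, hξ]; field_simp; ring
  have u2eq : 2*b/C = b/(a+b) := by
    rw [hCdef]; field_simp
  have v2eq : 2*b/C*c + -((1/s)*(s - 1 - 2*γ)) = -ξ := by
    rw [hCdef, hcdef, hα, hξ]; field_simp; ring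
  have hdivn : ∀ n : ℕ, (0:ℝ) < n → (n:ℝ) ^ (b/(a+b)) / n = (n:ℝ) ^ (-(a/(a+b))) := by
    intro n hn0
    have he : b/(a+b) - 1 = -(a/(a+b)) := by field_simp; ring
    rw [← he, Real.rpow_sub hn0, Real.rpow_one]
  -- eventual equalities
  have hevents : ∀ᶠ n : ℕ in atTop, (0:ℝ) < n ∧ 1 ≤ Real.log n ∧ 1 ≤ L n := by
    filter_upwards [eventually_gt_atTop 0, tlog.eventually_ge_atTop 1,
      hLtop.eventually_ge_atTop 1] with n h1 h2 h3
    exact ⟨by exact_mod_cast h1, h2, h3⟩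
  have e1 : (fun n : ℕ => (h n) ^ (2*δ) * Real.exp (-(2*a) / (h n) ^ s)) =ᶠ[atTop]
      fun n : ℕ => C ^ ((1/s)*(2*δ)) * (w n) ^ (-((1/s)*(2*δ))) * g n := by
    filter_upwards [hevents] with n ⟨h1, h2, h3⟩
    rw [master (2*δ) (-(2*a)) n h1 h2 h3, v1eq, u1eq, hgdef]
  have e2 : (fun n : ℕ => (h n) ^ (s - 1 - 2*γ) * Real.exp (2*b / (h n) ^ s) / n) =ᶠ[atTop]
      fun n : ℕ => C ^ ((1/s)*(s - 1 - 2*γ)) * (w n) ^ (-((1/s)*(s - 1 - 2*γ))) * g n := by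
    filter_upwards [hevents] with n ⟨h1, h2, h3⟩
    rw [master (s - 1 - 2*γ) (2*b) n h1 h2 h3, v2eq, u2eq, hgdef]
    have : ∀ X Y A B : ℝ, X * Y * (A * B) / (n:ℝ) = X * Y * ((A / (n:ℝ)) * B) := by
      intros; ring
    rw [this, hdivn n h1]
  -- big-O of each term
  have O : ∀ K u : ℝ, (fun n : ℕ => K * (w n) ^ u * g n) =O[atTop] g := by
    intro K u
    have h1 : Tendsto (fun n : ℕ => (w n) ^ u) atTop (nhds ((1:ℝ) ^ u)) := by
      exact ((Real.continuousAt_rpow_const 1 u (Or.inl one_ne_zero)).tendsto).comp hw1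
    rw [Real.one_rpow] at h1
    have h2 : (fun n : ℕ => K * (w n) ^ u) =O[atTop] (fun _ : ℕ => (1:ℝ)) :=
      (h1.isBigO_one ℝ).const_mul_left K
    simpa using h2.mul (isBigO_refl g atTop)
  exact (e1.trans_isBigO (O _ _)).add (e2.trans_isBigO (O _ _))
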